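/- Let T be a triangulated category with shift functor Σ and P a connective class of objects closed under isomorphisms and finite direct sums containing 0. Fix d ≥ 1. Then for all X, Y ∈ P ∗ ΣP ∗ ⋯ ∗ Σ^{d+1}P one has Hom_T(X, Σ^n Y) = 0 for every n ≥ d + 2. (This expresses that the corresponding extriangulated category has positive global dimension at most d + 1.) -/

import Mathlib

/-!
Statement 4: for `X, Y ∈ P ∗ ΣP ∗ ⋯ ∗ Σ^{d+1}P` one has `Hom(X, ΣⁿY) = 0` for all
`n ≥ d + 2` (the corresponding extriangulated category has positive global dimension
at most `d + 1`).
-/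

open CategoryTheory Limits Pretriangulated

universe v u

namespace AuslanderIyamaStmt4

variable {C : Type u} [Category.{v} C] [HasZeroObject C] [HasShift C ℤ] [Preadditive C]
  [∀ n : ℤ, (shiftFunctor C n).Additive] [Pretriangulated C] [HasBinaryBiproducts C]

/-- `S₁ ∗ S₂`: objects `Y` fitting in a distinguished triangle `X ⟶ Y ⟶ Z ⟶ X⟦1⟧`
with `X ∈ S₁` and `Z ∈ S₂`. -/
def star (S₁ S₂ : Set C) : Set C :=
  {Y | ∃ (X Z : C) (f : X ⟶ Y) (g : Y ⟶ Z) (h : Z ⟶ X⟦(1 : ℤ)⟧),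
    (Triangle.mk f g h ∈ distTriang C) ∧ X ∈ S₁ ∧ Z ∈ S₂}

/-- `Σⁿ S`, closed under isomorphism. -/
def shiftSet (n : ℤ) (S : Set C) : Set C :=
  {X | ∃ Y ∈ S, Nonempty (X ≅ Y⟦n⟧)}

/-- `V n = P ∗ ΣP ∗ ⋯ ∗ Σⁿ P` (associated to the left; by the octahedral axiom `∗` is
associative so the grouping is irrelevant). -/
def V (P : Set C) : ℕ → Set C
  | 0 => P
  | n + 1 => star (V P n) (shiftSet ((n : ℤ) + 1) P)

section Aux

variable (P : Set C)
  (hPconn : ∀ ⦃X Y : C⦄, X ∈ P → Y ∈ P → ∀ n : ℤ, 1 ≤ n → ∀ f : X ⟶ Y⟦n⟧, f = 0)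

include hPconn

lemma zero_shift {A B : C} (hA : A ∈ P) (hB : B ∈ P) (a b : ℤ) (h : a + 1 ≤ b)
    (f : A⟦a⟧ ⟶ B⟦b⟧) : f = 0 := by
  apply (shiftFunctor C (-a)).map_injective
  have g0 : (shiftShiftNeg A a).inv ≫ (shiftFunctor C (-a)).map f ≫
      ((shiftFunctorAdd' C b (-a) (b - a) (by ring)).app B).inv = 0 :=
    hPconn hA hB (b - a) (by omega) _
  have : (shiftFunctor C (-a)).map f = (shiftShiftNeg A a).hom ≫
      ((shiftShiftNeg A a).inv ≫ (shiftFunctor C (-a)).map f ≫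
        ((shiftFunctorAdd' C b (-a) (b - a) (by ring)).app B).inv) ≫
      ((shiftFunctorAdd' C b (-a) (b - a) (by ring)).app B).hom := by
    simp only [Category.assoc, Iso.hom_inv_id_assoc, Iso.inv_hom_id, Category.comp_id]
  rw [this, g0, zero_comp, Functor.map_zero]
  exact comp_zero

lemma aux1 : ∀ (m : ℕ) (X : C), X ∈ V P m → ∀ (B : C), B ∈ P → ∀ (k : ℤ),
    (m : ℤ) + 1 ≤ k → ∀ f : X ⟶ B⟦k⟧, f = 0 := by
  intro m
  induction m with
  | zero =>
    intro X hX B hB k hk f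
    exact hPconn hX hB k (by omega) f
  | succ m ih =>
    rintro X ⟨A, Z, u, v, w, hT, hA, Z₀, hZ₀, ⟨e⟩⟩ B hB k hk f
    obtain ⟨g, hg⟩ := Triangle.yoneda_exact₂ _ hT f
      (ih A hA B hB k (by push_cast at hk ⊢; omega) _)
    have hg0 : e.inv ≫ g = 0 :=
      zero_shift P hPconn hZ₀ hB ((m : ℤ) + 1) k (by push_cast at hk ⊢; omega) (e.inv ≫ g)
    have : g = e.hom ≫ (e.inv ≫ g) := (e.hom_inv_id_assoc g).symm
    rw [hg, this, hg0, comp_zero]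
    exact comp_zero

lemma aux2 [IsTriangulated C] : ∀ (m' : ℕ) (Y : C), Y ∈ V P m' →
    ∀ (m : ℕ) (X : C), X ∈ V P m → ∀ (n : ℤ), (m : ℤ) + 1 ≤ n →
    ∀ f : X ⟶ Y⟦n⟧, f = 0 := by
  intro m'
  induction m' with
  | zero =>
    intro Y hY m X hX n hn f
    exact aux1 P hPconn m X hX Y hY n hn f
  | succ m' ih =>
    rintro Y ⟨B, W, u, v, w, hT, hB, W₀, hW₀, ⟨e⟩⟩ m X hX n hn f
    have hT' := Triangle.shift_distinguished _ hT n
    have hvan : f ≫ v⟦n⟧' = 0 := by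
      rw [← cancel_mono ((shiftFunctor C n).map e.hom), zero_comp,
        ← cancel_mono (((shiftFunctorAdd' C ((m' : ℤ) + 1) n ((m' : ℤ) + 1 + n) rfl).app
          W₀).inv), zero_comp, Category.assoc, Category.assoc]
      exact aux1 P hPconn m X hX W₀ hW₀ ((m' : ℤ) + 1 + n) (by omega) _
    obtain ⟨g, hg⟩ := Triangle.coyoneda_exact₂ _ hT' f (by
      change f ≫ (n.negOnePow • (shiftFunctor C n).map v) = 0
      rw [Linear.comp_units_smul, hvan, smul_zero])
    have hg0 : g = 0 := ih B hB m X hX n hn g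
    rw [hg, hg0, zero_comp]
    rfl

end Aux

theorem statement4 [IsTriangulated C] (d : ℕ) (hd : 1 ≤ d) (P : Set C)
    (hPiso : ∀ ⦃X Y : C⦄, (X ≅ Y) → X ∈ P → Y ∈ P)
    (hPsum : ∀ ⦃X Y : C⦄, X ∈ P → Y ∈ P → (X ⊞ Y) ∈ P)
    (hPzero : ∀ ⦃X : C⦄, IsZero X → X ∈ P)
    (hPconn : ∀ ⦃X Y : C⦄, X ∈ P → Y ∈ P → ∀ n : ℤ, 1 ≤ n → ∀ f : X ⟶ Y⟦n⟧, f = 0)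
    {X Y : C} (hX : X ∈ V P (d + 1)) (hY : Y ∈ V P (d + 1))
    (n : ℤ) (hn : (d : ℤ) + 2 ≤ n) (f : X ⟶ Y⟦n⟧) :
    f = 0 :=
  aux2 P hPconn (d + 1) Y hY (d + 1) X hX n (by push_cast; omega) f

end AuslanderIyamaStmt4
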